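/- arXiv:2410.11572 — 2 statements merged into one kernel-verified Lean document; each statement's English description precedes it below -/
import Mathlib

section
/- For any two transfer flows tf1 and tf2, the product set tf1 ⊗ tf2 is upward-closed with respect to the order ⪯ on transfer flows. -/
/-- ℕ extended with an extra element `#` (represented by `none`),
which is an identity for addition and incomparable with integers. -/
abbrev NS := Option ℕ

def NS.sharp : NS := none

def NS.add : NS → NS → NS
  | none, x => x
  | some a, none => some a
  | some a, some b => some (a + b)

instance : Add NS := ⟨NS.add⟩
instance : Zero NS := ⟨none⟩

instance : AddCommMonoid NS where
  add_assoc a b c := by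
    show NS.add (NS.add a b) c = NS.add a (NS.add b c)
    cases a <;> cases b <;> cases c <;> simp [NS.add, Nat.add_assoc]
  zero_add a := by cases a <;> rfl
  add_zero a := by cases a <;> rfl
  add_comm a b := by
    show NS.add a b = NS.add b a
    cases a <;> cases b <;> simp [NS.add, Nat.add_comm]
  nsmul := nsmulRec

/-- The order on `NS`: `#` is only comparable with `#`. -/
def NS.le : NS → NS → Prop
  | none, none => True
  | some a, some b => a ≤ b
  | _, _ => False

def NS.lt (x y : NS) : Prop := NS.le x y ∧ x ≠ y

/-- A transfer flow: an agent part `f` and a control part `(src, dst)`. -/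
structure TF (Q L : Type) where
  f : Q → Q → NS
  src : L
  dst : L

/-- The order `⪯` on transfer flows. -/
def TF.le {Q L : Type} (t1 t2 : TF Q L) : Prop :=
  t1.src = t2.src ∧ t1.dst = t2.dst ∧ ∀ q q', NS.le (t1.f q q') (t2.f q q')

/-- The product `tf1 ⊗ tf2` of two transfer flows. -/
def TF.prod {Q L : Type} [Fintype Q] (t1 t2 : TF Q L) : Set (TF Q L) :=
  { t | t1.dst = t2.src ∧ t.src = t1.src ∧ t.dst = t2.dst ∧
    ∃ H : Q → Q → Q → NS,
      (∀ q1 q3, (∑ q2, H q1 q2 q3) = t.f q1 q3) ∧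
      (∀ q1 q2, NS.le (t1.f q1 q2) (∑ q3, H q1 q2 q3)) ∧
      (∀ q2 q3, NS.le (t2.f q2 q3) (∑ q1, H q1 q2 q3)) }

/-- The weight of a transfer flow: `#` contributes nothing. -/
def TF.weight {Q L : Type} [Fintype Q] (t : TF Q L) : ℕ :=
  ∑ q, ∑ q', (t.f q q').getD 0

/-- Minimality with respect to `⪯` within a set of transfer flows. -/
def MinimalIn {Q L : Type} (S : Set (TF Q L)) (t : TF Q L) : Prop :=
  t ∈ S ∧ ∀ t' ∈ S, TF.le t' t → t' = t
lemma NS.add_def (a b : NS) : a + b = NS.add a b := rfl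

lemma NS.zero_def : (0 : NS) = none := rfl

lemma NS.le_refl' (a : NS) : NS.le a a := by cases a <;> simp [NS.le]

lemma NS.le_trans' {a b c : NS} (h1 : NS.le a b) (h2 : NS.le b c) : NS.le a c := by
  cases a <;> cases b <;> cases c <;> simp_all [NS.le] <;> omega

lemma NS.add_le_add' {a b c d : NS} (h1 : NS.le a b) (h2 : NS.le c d) :
    NS.le (a + c) (b + d) := by
  cases a <;> cases b <;> cases c <;> cases d <;>
    simp_all [NS.le, NS.add_def, NS.add] <;> omega

lemma NS.sum_le' {ι : Type*} (s : Finset ι) (f g : ι → NS)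
    (h : ∀ i ∈ s, NS.le (f i) (g i)) :
    NS.le (∑ i ∈ s, f i) (∑ i ∈ s, g i) := by
  induction s using Finset.cons_induction_on with
  | empty => simp [NS.zero_def, NS.le]
  | cons _ _ ha ih =>
    rw [Finset.sum_cons, Finset.sum_cons]
    exact NS.add_le_add' (h _ (Finset.mem_cons_self _ _))
      (ih fun i hi => h i (Finset.mem_cons_of_mem hi))

lemma NS.sum_none' {ι : Type*} (s : Finset ι) (f : ι → NS)
    (h : ∀ i ∈ s, f i = none) : ∑ i ∈ s, f i = none := by
  rw [← NS.zero_def] at *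
  exact Finset.sum_eq_zero h

/-- For any transfer flows `tf1`, `tf2`, the product set `tf1 ⊗ tf2` is
upward-closed with respect to the order `⪯`. -/
theorem prod_upward_closed {Q L : Type} [Fintype Q]
    (tf1 tf2 : TF Q L) :
    ∀ tf ∈ TF.prod tf1 tf2, ∀ tf', TF.le tf tf' → tf' ∈ TF.prod tf1 tf2 := by
  rintro tf ⟨h12, hsrc, hdst, H, hrow, hc1, hc2⟩ tf' ⟨hs, hd, hle⟩
  classical
  refine ⟨h12, hs ▸ hsrc, hd ▸ hdst, ?_⟩
  -- the difference to be added on each row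
  set δ : Q → Q → NS := fun q1 q3 =>
    match tf.f q1 q3, tf'.f q1 q3 with
    | some a, some b => some (b - a)
    | _, _ => none with hδ
  -- extra term: add δ at a chosen `some` entry of the row
  set e : Q → Q → Q → NS := fun q1 q2 q3 =>
    if hq : ∃ q2', (H q1 q2' q3).isSome then
      (if q2 = hq.choose then δ q1 q3 else 0) else 0 with he
  refine ⟨fun q1 q2 q3 => H q1 q2 q3 + e q1 q2 q3, ?_, ?_, ?_⟩
  · -- row sums
    intro q1 q3
    rw [Finset.sum_add_distrib, hrow q1 q3]
    have hle13 := hle q1 q3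
    rcases htf : tf.f q1 q3 with _ | a
    · -- tf.f = none, hence tf'.f = none and all H entries are none
      rcases htf' : tf'.f q1 q3 with _ | b
      · have hall : ∀ q2 ∈ Finset.univ, e q1 q2 q3 = (0 : NS) := by
          intro q2 _
          simp only [he]
          split
          · split
            · simp only [hδ, htf, htf']
              rfl
            · rfl
          · rfl
        rw [Finset.sum_eq_zero hall]
        rfl
      · rw [htf, htf'] at hle13; exact absurd hle13 (by simp [NS.le])
    · -- tf.f = some a, hence tf'.f = some b, a ≤ b
      rcases htf' : tf'.f q1 q3 with _ | b
      · rw [htf, htf'] at hle13; exact absurd hle13 (by simp [NS.le])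
      rw [htf, htf'] at hle13
      have hab : a ≤ b := hle13
      -- the row sum is `some a`, so some entry is `some`
      have hq : ∃ q2', (H q1 q2' q3).isSome := by
        by_contra hcon
        push_neg at hcon
        have : ∑ q2, H q1 q2 q3 = none := by
          apply NS.sum_none'
          intro i _
          have := hcon i
          cases h' : H q1 i q3
          · rfl
          · rw [h'] at this; simp at this
        rw [hrow q1 q3, htf] at this
        cases this
      have hsum : ∑ q2, e q1 q2 q3 = δ q1 q3 := by
        have : ∀ q2, e q1 q2 q3 = if q2 = hq.choose then δ q1 q3 else 0 := by
          intro q2; simp only [he]; rw [dif_pos hq]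
        rw [Finset.sum_congr rfl (fun q2 _ => this q2)]
        rw [Finset.sum_ite_eq' Finset.univ hq.choose (fun _ => δ q1 q3)]
        simp
      rw [hsum]
      have : δ q1 q3 = some (b - a) := by simp only [hδ, htf, htf']
      rw [this, NS.add_def]
      show some (a + (b - a)) = some b
      congr 1
      omega
  all_goals {
    -- both remaining goals: column-sum inequalities, via pointwise H ≤ H + e
    have hpt : ∀ q1 q2 q3, NS.le (H q1 q2 q3) (H q1 q2 q3 + e q1 q2 q3) := by
      intro q1 q2 q3
      simp only [he]
      split
      · rename_i hq
        split
        · rename_i hqc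
          have hspec := hq.choose_spec
          rw [← hqc] at hspec
          cases hH : H q1 q2 q3
          · rw [hH] at hspec; simp at hspec
          · cases δ q1 q3 <;> simp [NS.add_def, NS.add, NS.le]
        · rw [add_zero]; exact NS.le_refl' _
      · rw [add_zero]; exact NS.le_refl' _
    first
    | exact fun q1 q2 => NS.le_trans' (hc1 q1 q2)
        (NS.sum_le' Finset.univ _ _ (fun q3 _ => hpt q1 q2 q3))
    | exact fun q2 q3 => NS.le_trans' (hc2 q2 q3)
        (NS.sum_le' Finset.univ _ _ (fun q1 _ => hpt q1 q2 q3))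
  }
end

section
/- For all g1, g2 : Q² → ℕ ∪ {#} such that ∑_{q1} g1(q1,q2) = ∑_{q3} g2(q2,q3) for every q2, there exists H : Q³ → ℕ ∪ {#} such that ∑_{q3} H(q1,q2,q3) = g1(q1,q2) for all q1,q2 and ∑_{q1} H(q1,q2,q3) = g2(q2,q3) for all q2,q3. -/
def NS.val : NS → ℕ := fun x => x.getD 0

def NS.valHom : NS →+ ℕ where
  toFun := NS.val
  map_zero' := rfl
  map_add' a b := by
    show NS.val (NS.add a b) = NS.val a + NS.val b
    cases a <;> cases b <;> simp [NS.val, NS.add]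

lemma NS.add_eq_zero {a b : NS} : a + b = 0 ↔ a = 0 ∧ b = 0 := by
  show NS.add a b = none ↔ a = none ∧ b = none
  cases a <;> cases b <;> simp [NS.add]

lemma NS.sum_eq_zero_iff {ι : Type} (s : Finset ι) (f : ι → NS) :
    (∑ i ∈ s, f i) = 0 ↔ ∀ i ∈ s, f i = 0 := by
  induction s using Finset.cons_induction with
  | empty => simp
  | cons a s ha ih => simp [Finset.sum_cons, NS.add_eq_zero, ih]

lemma NS.ext_of (x y : NS) (h0 : (x = 0 ↔ y = 0)) (hv : NS.val x = NS.val y) : x = y := by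
  have h0' : (x = none ↔ y = none) := h0
  cases x <;> cases y <;> simp_all [NS.val]

lemma nat_transport {Q : Type} [Fintype Q] (r c : Q → ℕ)
    (hrc : ∑ q, r q = ∑ q, c q) :
    ∃ N : Q → Q → ℕ, (∀ q1, ∑ q3, N q1 q3 = r q1) ∧ (∀ q3, ∑ q1, N q1 q3 = c q3) := by
  classical
  set T := ∑ q, r q with hT
  have h1 : Fintype.card (Σ q, Fin (r q)) = T := by simp [hT]
  have h2 : Fintype.card (Σ q, Fin (c q)) = T := by simp [← hrc]
  let e1 := Fintype.equivFinOfCardEq h1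
  let e2 := Fintype.equivFinOfCardEq h2
  refine ⟨fun q1 q3 => ∑ x : Fin T,
      (if (e1.symm x).1 = q1 ∧ (e2.symm x).1 = q3 then 1 else 0), ?_, ?_⟩
  · intro q1
    rw [Finset.sum_comm]
    have key : ∀ x : Fin T, (∑ q3 : Q, if (e1.symm x).1 = q1 ∧ (e2.symm x).1 = q3 then 1 else 0)
        = if (e1.symm x).1 = q1 then 1 else 0 := by
      intro x
      by_cases hx : (e1.symm x).1 = q1 <;> simp [hx]
    rw [Finset.sum_congr rfl (fun x _ => key x)]
    rw [Equiv.sum_comp e1.symm (fun s : (Σ q, Fin (r q)) => if s.1 = q1 then 1 else 0)]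
    rw [← Finset.univ_sigma_univ, Finset.sum_sigma]
    simp [apply_ite Finset.card, Finset.sum_ite_eq]
  · intro q3
    have key : ∀ x : Fin T, (∑ q1 : Q, if (e1.symm x).1 = q1 ∧ (e2.symm x).1 = q3 then 1 else 0)
        = if (e2.symm x).1 = q3 then 1 else 0 := by
      intro x
      by_cases hx : (e2.symm x).1 = q3 <;> simp [hx]
    rw [Finset.sum_comm]
    rw [Finset.sum_congr rfl (fun x _ => key x)]
    rw [Equiv.sum_comp e2.symm (fun s : (Σ q, Fin (c q)) => if s.1 = q3 then 1 else 0)]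
    rw [← Finset.univ_sigma_univ, Finset.sum_sigma]
    simp [apply_ite Finset.card, Finset.sum_ite_eq]

lemma NS.some_ne_zero {a : ℕ} : (some a : NS) ≠ 0 := fun h => Option.some_ne_none a h

/-- For all `g1, g2 : Q² → ℕ ∪ {#}` such that
`∑_{q1} g1(q1,q2) = ∑_{q3} g2(q2,q3)` for every `q2`, there exists
`H : Q³ → ℕ ∪ {#}` with `∑_{q3} H(q1,q2,q3) = g1(q1,q2)` and
`∑_{q1} H(q1,q2,q3) = g2(q2,q3)`. -/
theorem exists_threeway_witness {Q : Type} [Fintype Q]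
    (g1 g2 : Q → Q → NS)
    (h : ∀ q2, (∑ q1, g1 q1 q2) = ∑ q3, g2 q2 q3) :
    ∃ H : Q → Q → Q → NS,
      (∀ q1 q2, (∑ q3, H q1 q2 q3) = g1 q1 q2) ∧
      (∀ q2 q3, (∑ q1, H q1 q2 q3) = g2 q2 q3) := by
  classical
  have hval : ∀ (f : Q → NS), NS.val (∑ i, f i) = ∑ i, NS.val (f i) :=
    fun f => map_sum NS.valHom f Finset.univ
  have key : ∀ q2, ∃ N : Q → Q → ℕ,
      (∀ q1, ∑ q3, N q1 q3 = NS.val (g1 q1 q2)) ∧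
      (∀ q3, ∑ q1, N q1 q3 = NS.val (g2 q2 q3)) := by
    intro q2
    apply nat_transport
    rw [← hval, ← hval, h q2]
  choose N hN1 hN2 using key
  refine ⟨fun q1 q2 q3 => if g1 q1 q2 = 0 ∨ g2 q2 q3 = 0 then 0 else some (N q2 q1 q3), ?_, ?_⟩
  · intro q1 q2
    by_cases hg : g1 q1 q2 = 0
    · rw [Finset.sum_eq_zero (fun q3 _ => by simp [hg]), hg]
    · have hne : ¬ ∀ q3, g2 q2 q3 = 0 := by
        intro hall
        apply hg
        have hz : (∑ q1', g1 q1' q2) = 0 := by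
          rw [h q2]; exact Finset.sum_eq_zero (fun q3 _ => hall q3)
        exact (NS.sum_eq_zero_iff _ _).1 hz q1 (Finset.mem_univ q1)
      push_neg at hne
      obtain ⟨q30, hq30⟩ := hne
      apply NS.ext_of
      · constructor
        · intro hs
          have h30 := (NS.sum_eq_zero_iff _ _).1 hs q30 (Finset.mem_univ q30)
          simp only [hg, hq30, or_self, if_neg, if_false] at h30
          exact (NS.some_ne_zero h30).elim
        · intro h'; exact absurd h' hg
      · rw [hval, ← hN1 q2 q1]
        apply Finset.sum_congr rfl
        intro q3 _
        by_cases hz : g2 q2 q3 = 0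
        · have hcol : N q2 q1 q3 = 0 := by
            have hsum : (∑ q1', N q2 q1' q3) = 0 := by rw [hN2 q2 q3, hz]; rfl
            exact (Finset.sum_eq_zero_iff).1 hsum q1 (Finset.mem_univ q1)
          simp [hz, hcol, NS.val, show (0:NS) = none from rfl]
        · simp [hz, hg, NS.val]
  · intro q2 q3
    by_cases hg : g2 q2 q3 = 0
    · rw [Finset.sum_eq_zero (fun q1 _ => by simp [hg]), hg]
    · have hne : ¬ ∀ q1, g1 q1 q2 = 0 := by
        intro hall
        apply hg
        have hz : (∑ q3', g2 q2 q3') = 0 := by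
          rw [← h q2]; exact Finset.sum_eq_zero (fun q1 _ => hall q1)
        exact (NS.sum_eq_zero_iff _ _).1 hz q3 (Finset.mem_univ q3)
      push_neg at hne
      obtain ⟨q10, hq10⟩ := hne
      apply NS.ext_of
      · constructor
        · intro hs
          have h10 := (NS.sum_eq_zero_iff _ _).1 hs q10 (Finset.mem_univ q10)
          simp only [hg, hq10, or_self, if_neg, if_false] at h10
          exact (NS.some_ne_zero h10).elim
        · intro h'; exact absurd h' hg
      · rw [hval, ← hN2 q2 q3]
        apply Finset.sum_congr rfl
        intro q1 _
        by_cases hz : g1 q1 q2 = 0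
        · have hrow : N q2 q1 q3 = 0 := by
            have hsum : (∑ q3', N q2 q1 q3') = 0 := by rw [hN1 q2 q1, hz]; rfl
            exact (Finset.sum_eq_zero_iff).1 hsum q3 (Finset.mem_univ q3)
          simp [hz, hrow, NS.val, show (0:NS) = none from rfl]
        · simp [hz, hg, NS.val]
end
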